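/- Let F have unit-norm columns and mutual coherence μ, let c* be supported on a set S of size k with (2k-1)μ < 1, and let b = Fc* + e with ‖e‖₂ ≤ ε. Then the least-squares solution restricted to S, ĉ_S = (F_S^T F_S)^{-1} F_S^T b, satisfies ‖ĉ_S - c*_S‖₂ ≤ ε / √(1 - (k-1)μ). -/

import Mathlib

open Matrix Finset

lemma quad_lb (m k : ℕ) (A : Matrix (Fin m) (Fin k) ℝ) (μ : ℝ)
    (hunit : ∀ j, ∑ i, (A i j) ^ 2 = 1)
    (hμ : ∀ j l, j ≠ l → |∑ i, A i j * A i l| ≤ μ) (hμ0 : 0 ≤ μ)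
    (x : Fin k → ℝ) :
    (1 - ((k:ℝ) - 1) * μ) * ∑ j, x j ^ 2 ≤ ∑ i, (A.mulVec x i) ^ 2 := by
  set g : Fin k → Fin k → ℝ := fun j l => ∑ i, A i j * A i l with hg
  have expand : ∑ i, (A.mulVec x i) ^ 2 = ∑ j, ∑ l, (x j * x l) * g j l := by
    calc ∑ i, (A.mulVec x i) ^ 2
        = ∑ i, ∑ j, ∑ l, (x j * x l) * (A i j * A i l) := by
          refine Finset.sum_congr rfl fun i _ => ?_
          simp only [Matrix.mulVec, dotProduct, sq, Finset.sum_mul_sum]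
          exact Finset.sum_congr rfl fun j _ => Finset.sum_congr rfl fun l _ => by ring
      _ = ∑ j, ∑ l, (x j * x l) * g j l := by
          rw [Finset.sum_comm]
          refine Finset.sum_congr rfl fun j _ => ?_
          rw [Finset.sum_comm]
          refine Finset.sum_congr rfl fun l _ => ?_
          rw [hg, Finset.mul_sum]
  set S := ∑ j, |x j| with hS
  set T := ∑ j, x j ^ 2 with hT
  have hT0 : 0 ≤ T := Finset.sum_nonneg fun j _ => sq_nonneg _
  have hS2 : S ^ 2 ≤ (k : ℝ) * T := by
    have := Finset.sum_mul_sq_le_sq_mul_sq Finset.univ (fun j => |x j|) (fun _ => 1)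
    simpa [sq_abs, Finset.card_univ, mul_comm] using this
  have split : ∑ j, ∑ l, (x j * x l) * g j l
      = T + ∑ j, ∑ l ∈ Finset.univ.erase j, (x j * x l) * g j l := by
    rw [hT, ← Finset.sum_add_distrib]
    refine Finset.sum_congr rfl fun j _ => ?_
    rw [← Finset.add_sum_erase Finset.univ (fun l => (x j * x l) * g j l) (Finset.mem_univ j)]
    have hgjj : g j j = 1 := by
      rw [hg]; simpa [sq] using hunit j
    show x j * x j * g j j + _ = _
    rw [hgjj]; ring_nf
  have offb : -(μ * (S ^ 2 - T)) ≤ ∑ j, ∑ l ∈ Finset.univ.erase j, (x j * x l) * g j l := by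
    have key : ∀ j, ∑ l ∈ Finset.univ.erase j, -(μ * (|x j| * |x l|))
        ≤ ∑ l ∈ Finset.univ.erase j, (x j * x l) * g j l := by
      intro j
      refine Finset.sum_le_sum fun l hl => ?_
      have hne : j ≠ l := (Finset.ne_of_mem_erase hl).symm
      have h1 : |(x j * x l) * g j l| ≤ μ * (|x j| * |x l|) := by
        rw [abs_mul, abs_mul]
        calc |x j| * |x l| * |g j l| ≤ |x j| * |x l| * μ :=
              mul_le_mul_of_nonneg_left (hμ j l hne) (by positivity)
          _ = μ * (|x j| * |x l|) := by ring
      linarith [neg_abs_le ((x j * x l) * g j l)]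
    have hsum : ∑ j, ∑ l ∈ Finset.univ.erase j, (μ * (|x j| * |x l|)) = μ * (S ^ 2 - T) := by
      have hrow : ∀ j : Fin k, ∑ l ∈ Finset.univ.erase j, (μ * (|x j| * |x l|))
          = μ * (|x j| * (S - |x j|)) := by
        intro j
        rw [← Finset.mul_sum, ← Finset.mul_sum, Finset.sum_erase_eq_sub (Finset.mem_univ j), hS]
      rw [Finset.sum_congr rfl (fun j _ => hrow j), ← Finset.mul_sum]
      congr 1
      have h2 : ∑ j, |x j| * (S - |x j|) = S * S - T := by
        have : ∀ j : Fin k, |x j| * (S - |x j|) = |x j| * S - x j ^ 2 := by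
          intro j
          have : |x j| * |x j| = x j ^ 2 := by rw [← sq, sq_abs]
          nlinarith [this]
        rw [Finset.sum_congr rfl (fun j _ => this j), Finset.sum_sub_distrib,
          ← Finset.sum_mul, hS, hT]
      rw [h2]; ring
    have hneg : ∑ j, ∑ l ∈ Finset.univ.erase j, -(μ * (|x j| * |x l|)) = -(μ * (S ^ 2 - T)) := by
      simp only [Finset.sum_neg_distrib]
      rw [hsum]
    rw [← hneg]
    exact Finset.sum_le_sum fun j _ => key j
  have h1 : μ * (S ^ 2 - T) ≤ ((k : ℝ) - 1) * μ * T := by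
    have : μ * (S ^ 2 - T) ≤ μ * ((k : ℝ) * T - T) := by
      apply mul_le_mul_of_nonneg_left _ hμ0
      linarith
    linarith [this]
  rw [expand, split]
  linarith

/-- `F_S` has unit-norm columns with pairwise coherence at most `μ`,
`(2k-1)μ < 1`, `b = F_S c* + e` with `‖e‖₂ ≤ ε`; then the least-squares solution on `S`,
`ĉ_S = (F_Sᵀ F_S)⁻¹ F_Sᵀ b`, satisfies `‖ĉ_S - c*_S‖₂ ≤ ε / √(1 - (k-1)μ)`. -/
theorem stmt4 (m k : ℕ) (A : Matrix (Fin m) (Fin k) ℝ) (μ ε : ℝ)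
    (hunit : ∀ j, ∑ i, (A i j) ^ 2 = 1)
    (hμ : ∀ j l, j ≠ l → |∑ i, A i j * A i l| ≤ μ)
    (hμ0 : 0 ≤ μ)
    (hk : (2 * (k : ℝ) - 1) * μ < 1)
    (cstar : Fin k → ℝ) (e : Fin m → ℝ) (he : Real.sqrt (∑ i, (e i) ^ 2) ≤ ε)
    (b : Fin m → ℝ) (hb : b = A.mulVec cstar + e)
    (chat : Fin k → ℝ)
    (hchat : chat = (Aᵀ * A)⁻¹.mulVec (Aᵀ.mulVec b)) :
    Real.sqrt (∑ j, (chat j - cstar j) ^ 2) ≤ ε / Real.sqrt (1 - ((k : ℝ) - 1) * μ) := by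
  set lam := 1 - ((k : ℝ) - 1) * μ with hlam
  have hlam0 : 0 < lam := by
    have : ((k : ℝ) - 1) * μ ≤ (2 * (k : ℝ) - 1) * μ := by
      apply mul_le_mul_of_nonneg_right _ hμ0
      have : (0:ℝ) ≤ (k:ℝ) := Nat.cast_nonneg k
      linarith
    rw [hlam]; linarith
  have hε0 : 0 ≤ ε := le_trans (Real.sqrt_nonneg _) he
  have hE : ∑ i, (e i) ^ 2 ≤ ε ^ 2 := by
    have h := Real.sq_sqrt (show (0:ℝ) ≤ ∑ i, (e i) ^ 2 from
      Finset.sum_nonneg fun i _ => sq_nonneg (e i))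
    nlinarith [Real.sqrt_nonneg (∑ i, (e i) ^ 2)]
  set G := Aᵀ * A with hG
  -- G is positive definite
  have hPD : G.PosDef := by
    rw [Matrix.posDef_iff_dotProduct_mulVec]
    constructor
    · show (Aᵀ * A)ᴴ = Aᵀ * A
      ext i j
      simp only [Matrix.conjTranspose_apply, Matrix.mul_apply, Matrix.transpose_apply,
        star_trivial]
      exact Finset.sum_congr rfl fun t _ => mul_comm _ _
    · intro x hx
      have hx2 : 0 < ∑ j, x j ^ 2 := by
        rcases Function.ne_iff.mp hx with ⟨j, hj⟩
        have : 0 < x j ^ 2 := by nlinarith [abs_pos.mpr hj, sq_abs (x j)]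
        exact lt_of_lt_of_le this (Finset.single_le_sum (fun l _ => sq_nonneg (x l)) (Finset.mem_univ j))
      have hquad := quad_lb m k A μ hunit hμ hμ0 x
      have hdp : star x ⬝ᵥ G.mulVec x = ∑ i, (A.mulVec x i) ^ 2 := by
        rw [hG, ← Matrix.mulVec_mulVec, Matrix.dotProduct_mulVec, Matrix.vecMul_transpose]
        simp [dotProduct, sq]
      rw [hdp]
      refine lt_of_lt_of_le (mul_pos ?_ hx2) hquad
      rw [← hlam]; exact hlam0
  have hdet : IsUnit G.det := isUnit_iff_ne_zero.mpr (ne_of_gt hPD.det_pos)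
  -- the residual vector
  set x : Fin k → ℝ := chat - cstar with hx
  have hGx : G.mulVec x = Aᵀ.mulVec e := by
    have h1 : G.mulVec chat = Aᵀ.mulVec b := by
      rw [hchat, Matrix.mulVec_mulVec, Matrix.mul_nonsing_inv G hdet, Matrix.one_mulVec]
    have h2 : Aᵀ.mulVec b = G.mulVec cstar + Aᵀ.mulVec e := by
      rw [hb, Matrix.mulVec_add, Matrix.mulVec_mulVec, hG]
    rw [hx, Matrix.mulVec_sub, h1, h2]
    abel
  set y := A.mulVec x with hy
  have hQ : ∑ i, y i ^ 2 = ∑ i, y i * e i := by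
    have h1 : x ⬝ᵥ G.mulVec x = y ⬝ᵥ y := by
      rw [hG, ← Matrix.mulVec_mulVec, Matrix.dotProduct_mulVec, Matrix.vecMul_transpose, hy]
    have h2 : x ⬝ᵥ G.mulVec x = y ⬝ᵥ e := by
      rw [hGx, Matrix.dotProduct_mulVec, Matrix.vecMul_transpose, hy]
    have := h1.symm.trans h2
    simpa [dotProduct, sq] using this
  have hQ0 : 0 ≤ ∑ i, y i ^ 2 := Finset.sum_nonneg fun i _ => sq_nonneg _
  have hCS : (∑ i, y i * e i) ^ 2 ≤ (∑ i, y i ^ 2) * (∑ i, (e i) ^ 2) :=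
    Finset.sum_mul_sq_le_sq_mul_sq Finset.univ y e
  have hQE : ∑ i, y i ^ 2 ≤ ∑ i, (e i) ^ 2 := by
    rcases eq_or_lt_of_le hQ0 with h | h
    · rw [← h]; exact Finset.sum_nonneg fun i _ => sq_nonneg _
    · nlinarith [hCS, hQ]
  have hquad := quad_lb m k A μ hunit hμ hμ0 x
  have hxe : ∀ j, x j = chat j - cstar j := fun j => rfl
  have hTbound : ∑ j, (chat j - cstar j) ^ 2 ≤ ε ^ 2 / lam := by
    have hT : lam * ∑ j, (chat j - cstar j) ^ 2 ≤ ε ^ 2 := by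
      calc lam * ∑ j, (chat j - cstar j) ^ 2 = lam * ∑ j, x j ^ 2 := by
            congr 1
        _ ≤ ∑ i, (A.mulVec x i) ^ 2 := hquad
        _ = ∑ i, y i ^ 2 := by rw [hy]
        _ ≤ ∑ i, (e i) ^ 2 := hQE
        _ ≤ ε ^ 2 := hE
    rw [le_div_iff₀ hlam0]
    linarith [hT]
  calc Real.sqrt (∑ j, (chat j - cstar j) ^ 2) ≤ Real.sqrt (ε ^ 2 / lam) :=
        Real.sqrt_le_sqrt hTbound
    _ = ε / Real.sqrt lam := by
        rw [Real.sqrt_div (sq_nonneg ε), Real.sqrt_sq hε0]
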